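/- Assume moreover ρ < 3/π². Define x : ℕ₊ → {−1, 0, 1} by x(n) = μMob(b_k), where k is the unique index with n ∈ {b_k + m·p_k : m ≥ 0}. Then x is a regularly recurrent (Toeplitz) sequence and liminf_{N→∞} (1/N)·∑_{n=1}^{N} x(n)·μMob(n) ≥ 6/π² − 2ρ > 0; in particular there exists a one-sided Toeplitz sequence strongly correlated with the Möbius function. -/

import Mathlib

open Filter Topology Finset ArithmeticFunction
open scoped ArithmeticFunction.Moebius ArithmeticFunction.zeta

lemma aux_summable_moebius : Summable (fun n : ℕ => (μ n : ℝ) / (n:ℝ)^2) := by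
  apply Summable.of_abs
  apply Summable.of_nonneg_of_le (fun n => abs_nonneg _) (fun n => ?_)
    (Real.summable_one_div_nat_pow.mpr one_lt_two)
  rcases Nat.eq_zero_or_pos n with rfl | hn
  · simp
  rw [abs_div, abs_of_nonneg (by positivity : (0:ℝ) ≤ (n:ℝ)^2),
    div_le_div_iff_of_pos_right (by positivity)]
  have := @ArithmeticFunction.abs_moebius_le_one n
  exact_mod_cast (by exact_mod_cast this : |((μ n : ℤ):ℝ)| ≤ 1)

lemma aux_tsum_moebius : ∑' n : ℕ, (μ n : ℝ) / (n:ℝ)^2 = 6 / Real.pi ^ 2 := by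
  have h2 : (1:ℝ) < (2:ℂ).re := by norm_num
  have hmul := LSeries_one_mul_Lseries_moebius h2
  rw [LSeries_one_eq_riemannZeta h2, riemannZeta_two] at hmul
  have hterm : (fun n => LSeries.term (fun m => ((μ m : ℤ):ℂ)) 2 n)
      = fun n => (((μ n : ℝ) / (n:ℝ)^2 : ℝ) : ℂ) := by
    funext n
    rcases eq_or_ne n 0 with rfl | hn
    · simp [LSeries.term_zero]
    · rw [LSeries.term_of_ne_zero hn]
      rw [show (2:ℂ) = ((2:ℕ):ℂ) by norm_num, Complex.cpow_natCast]
      push_cast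
      ring
  have hL : LSeries (fun m => ((μ m : ℤ):ℂ)) 2 = (((∑' n : ℕ, (μ n : ℝ) / (n:ℝ)^2 : ℝ)) : ℂ) := by
    rw [LSeries, hterm, Complex.ofReal_tsum]
  rw [hL] at hmul
  have hpi : (Real.pi : ℂ) ≠ 0 := by exact_mod_cast Real.pi_ne_zero
  set S : ℝ := ∑' n : ℕ, (μ n : ℝ) / (n:ℝ)^2 with hS
  have key : ((S : ℝ) : ℂ) = ((6 / Real.pi^2 : ℝ) : ℂ) := by
    rw [Complex.ofReal_div]
    push_cast
    field_simp
    linear_combination 6 * hmul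
  exact_mod_cast key

lemma aux_sum_divisors_moebius (s : ℕ) :
    ∑ d ∈ s.divisors, μ d = if s = 1 then 1 else 0 := by
  calc ∑ d ∈ s.divisors, μ d = (μ * ζ : ArithmeticFunction ℤ) s :=
        ArithmeticFunction.coe_mul_zeta_apply.symm
    _ = (1 : ArithmeticFunction ℤ) s := by rw [ArithmeticFunction.moebius_mul_coe_zeta]
    _ = _ := ArithmeticFunction.one_apply

lemma aux_moebius_filter_sum {n : ℕ} (hn : n ≠ 0) :
    ∑ d ∈ n.divisors.filter (fun d => d^2 ∣ n), μ d = if Squarefree n then 1 else 0 := by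
  set s := Nat.floorRoot 2 n with hs
  have hs0 : s ≠ 0 := Nat.floorRoot_ne_zero.mpr ⟨two_ne_zero, hn⟩
  have hset : n.divisors.filter (fun d => d^2 ∣ n) = s.divisors := by
    ext d
    simp only [Finset.mem_filter, Nat.mem_divisors]
    constructor
    · rintro ⟨⟨hdn, -⟩, hd2⟩
      exact ⟨Nat.pow_dvd_iff_dvd_floorRoot.mp hd2, hs0⟩
    · rintro ⟨hds, -⟩
      have hd2 : d^2 ∣ n := Nat.pow_dvd_iff_dvd_floorRoot.mpr hds
      exact ⟨⟨(dvd_pow_self d two_ne_zero).trans hd2, hn⟩, hd2⟩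
  have hiff : s = 1 ↔ Squarefree n := by
    constructor
    · intro h1
      rw [Nat.squarefree_iff_prime_squarefree]
      intro q hq hqq
      have : q ∣ s := Nat.pow_dvd_iff_dvd_floorRoot.mp (by rwa [sq])
      rw [h1, Nat.dvd_one] at this
      exact hq.ne_one this
    · intro hsf
      have hdvd : s * s ∣ n := by
        have := Nat.floorRoot_pow_dvd (n := 2) (a := n)
        rwa [sq] at this
      exact Nat.isUnit_iff.mp (hsf s hdvd)
  rw [hset, aux_sum_divisors_moebius, if_congr hiff rfl rfl]

lemma aux_squarefree_count (N : ℕ) :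
    ∑ n ∈ Finset.Icc 1 N, (μ n)^2
      = ∑ d ∈ Finset.Icc 1 (Nat.sqrt N), μ d * ((N / d^2 : ℕ) : ℤ) := by
  have step1 : ∀ n ∈ Finset.Icc 1 N,
      (μ n)^2 = ∑ d ∈ (Finset.Icc 1 (Nat.sqrt N)).filter (fun d => d^2 ∣ n), μ d := by
    intro n hn
    rw [Finset.mem_Icc] at hn
    have hn0 : n ≠ 0 := by omega
    have hset : (Finset.Icc 1 (Nat.sqrt N)).filter (fun d => d^2 ∣ n)
        = n.divisors.filter (fun d => d^2 ∣ n) := by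
      ext d
      simp only [Finset.mem_filter, Finset.mem_Icc, Nat.mem_divisors]
      constructor
      · rintro ⟨-, hd2⟩
        exact ⟨⟨(dvd_pow_self d two_ne_zero).trans hd2, hn0⟩, hd2⟩
      · rintro ⟨⟨hdn, -⟩, hd2⟩
        refine ⟨⟨?_, ?_⟩, hd2⟩
        · rcases Nat.eq_zero_or_pos d with rfl | hd
          · simp at hd2; omega
          · omega
        · rw [Nat.le_sqrt']
          exact le_trans (Nat.le_of_dvd (by omega) hd2) hn.2
    rw [hset, aux_moebius_filter_sum hn0, ArithmeticFunction.moebius_sq]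
  rw [Finset.sum_congr rfl step1]
  simp_rw [Finset.sum_filter]
  rw [Finset.sum_comm]
  refine Finset.sum_congr rfl fun d hd => ?_
  rw [← Finset.sum_filter, Finset.sum_const,
    (show Finset.Icc 1 N = Finset.Ioc 0 N from Finset.Icc_add_one_left_eq_Ioc 0 N),
    Nat.Ioc_filter_dvd_card_eq_div, nsmul_eq_mul, mul_comm]

lemma aux_tendsto_partial :
    Tendsto (fun M : ℕ => ∑ d ∈ Finset.Icc 1 M, (μ d : ℝ) / (d:ℝ)^2) atTop
      (𝓝 (6 / Real.pi ^ 2)) := by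
  have h := aux_summable_moebius.hasSum.tendsto_sum_nat
  rw [aux_tsum_moebius] at h
  have heq : (fun M : ℕ => ∑ d ∈ Finset.Icc 1 M, (μ d : ℝ) / (d:ℝ)^2)
      = (fun n : ℕ => ∑ d ∈ Finset.range n, (μ d : ℝ) / (d:ℝ)^2) ∘ (fun M => M + 1) := by
    funext M
    simp only [Function.comp_apply]
    rw [Finset.range_eq_Ico, Finset.sum_eq_sum_Ico_succ_bot (by omega : 0 < M + 1),
      ← Finset.Ico_add_one_right_eq_Icc]
    simp
  rw [heq]
  exact h.comp (tendsto_add_atTop_nat 1)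

lemma aux_sqrt_tendsto : Tendsto Nat.sqrt atTop atTop := by
  apply Filter.tendsto_atTop_atTop.mpr
  intro M
  exact ⟨M * M, fun N hN => Nat.le_sqrt.mpr hN⟩

lemma aux_sqrt_div_tendsto :
    Tendsto (fun N : ℕ => (Nat.sqrt N : ℝ) / N) atTop (𝓝 0) := by
  apply squeeze_zero' (Filter.Eventually.of_forall fun N => by positivity)
    (g := fun N : ℕ => ((Nat.sqrt N : ℝ))⁻¹)
  · filter_upwards [Filter.eventually_ge_atTop 1] with N hN
    have h1 : 1 ≤ Nat.sqrt N := Nat.le_sqrt.mpr (by omega)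
    have h2 : (Nat.sqrt N : ℝ) * (Nat.sqrt N : ℝ) ≤ N := by
      exact_mod_cast Nat.sqrt_le N
    have hNpos : (0:ℝ) < N := by exact_mod_cast (by omega : 0 < N)
    have hsq : (0:ℝ) < (Nat.sqrt N : ℝ) := by exact_mod_cast h1
    rw [div_le_iff₀ hNpos, inv_mul_eq_div, le_div_iff₀ hsq]
    exact h2
  · exact tendsto_inv_atTop_zero.comp
      (tendsto_natCast_atTop_atTop.comp aux_sqrt_tendsto)

lemma aux_SQ_lower (N : ℕ) (hN : 1 ≤ N) :
    (∑ d ∈ Finset.Icc 1 (Nat.sqrt N), (μ d : ℝ) / (d:ℝ)^2) - (Nat.sqrt N : ℝ) / N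
      ≤ (N:ℝ)⁻¹ * ∑ n ∈ Finset.Icc 1 N, ((μ n : ℤ) : ℝ)^2 := by
  have hNpos : (0:ℝ) < N := by exact_mod_cast hN
  have hsum : ∑ n ∈ Finset.Icc 1 N, ((μ n : ℤ) : ℝ)^2
      = ∑ d ∈ Finset.Icc 1 (Nat.sqrt N), (μ d : ℝ) * ((N / d^2 : ℕ) : ℝ) := by
    have h0 : ((∑ n ∈ Finset.Icc 1 N, (μ n)^2 : ℤ) : ℝ)
        = ((∑ d ∈ Finset.Icc 1 (Nat.sqrt N), μ d * ((N / d^2 : ℕ) : ℤ) : ℤ) : ℝ) := by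
      rw [aux_squarefree_count N]
    push_cast at h0
    convert h0 using 2
    norm_cast
    rw [Int.cast_mul, Int.cast_natCast]
  rw [hsum, Finset.mul_sum]
  have hcard : ((Nat.sqrt N : ℝ)) / N = ∑ _d ∈ Finset.Icc 1 (Nat.sqrt N), (1:ℝ)/N := by
    rw [Finset.sum_const, Nat.card_Icc]
    simp [nsmul_eq_mul]
    ring
  rw [hcard, ← Finset.sum_sub_distrib]
  apply Finset.sum_le_sum
  intro d hd
  rw [Finset.mem_Icc] at hd
  have hd1 : 1 ≤ d := hd.1
  set m : ℝ := (μ d : ℝ) with hm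
  set a : ℝ := ((N / d^2 : ℕ) : ℝ) with ha
  have hD : (0:ℝ) < (d:ℝ)^2 := by positivity
  have hm1 : |m| ≤ 1 := by
    rw [hm]
    exact_mod_cast (by exact_mod_cast ArithmeticFunction.abs_moebius_le_one :
      |((μ d : ℤ) : ℝ)| ≤ 1)
  obtain ⟨hm2, hm3⟩ := abs_le.mp hm1
  have ha1 : a ≤ (N:ℝ) / (d:ℝ)^2 := by
    rw [ha]
    calc ((N / d^2 : ℕ) : ℝ) ≤ (N:ℝ) / ((d^2 : ℕ) : ℝ) := Nat.cast_div_le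
      _ = (N:ℝ) / (d:ℝ)^2 := by push_cast; ring
  have ha2 : (N:ℝ) / (d:ℝ)^2 ≤ a + 1 := by
    have hlt : N < (N / d^2 + 1) * d^2 := by
      have := Nat.lt_div_mul_add (a := N) (b := d^2) (by positivity)
      rwa [add_mul, one_mul]
    have : (N:ℝ) < (a + 1) * (d:ℝ)^2 := by rw [ha]; exact_mod_cast hlt
    rw [div_le_iff₀ hD]
    linarith
  have key : m * ((N:ℝ)/(d:ℝ)^2) - 1 ≤ m * a := by
    nlinarith [mul_nonneg (by linarith : (0:ℝ) ≤ 1 - m)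
      (by linarith : (0:ℝ) ≤ (N:ℝ)/(d:ℝ)^2 - a),
      mul_nonneg (by linarith : (0:ℝ) ≤ 1 + m)
      (by linarith : (0:ℝ) ≤ (N:ℝ)/(d:ℝ)^2 - a)]
  calc m / (d:ℝ)^2 - 1/N = (m * ((N:ℝ)/(d:ℝ)^2) - 1) / N := by
        field_simp
      _ ≤ (m * a) / N := by gcongr
      _ = (N:ℝ)⁻¹ * (m * a) := by ring

section Aux
variable (p b : ℕ → ℕ)

lemma aux_cover
    (hb1 : b 1 = 1)
    (hbrec : ∀ k : ℕ, 1 ≤ k → IsLeast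
      {n : ℕ | 1 ≤ n ∧ ∀ j : ℕ, 1 ≤ j → j ≤ k → ¬∃ m : ℕ, n = b j + m * p j} (b (k + 1))) :
    (∀ k : ℕ, 1 ≤ k → k ≤ b k) ∧
    (∀ n : ℕ, 1 ≤ n → ∃ k, 1 ≤ k ∧ k ≤ n ∧ ∃ m : ℕ, n = b k + m * p k) := by
  have hnotmem : ∀ k : ℕ, 1 ≤ k →
      b k ∉ {n : ℕ | 1 ≤ n ∧ ∀ j : ℕ, 1 ≤ j → j ≤ k → ¬∃ m : ℕ, n = b j + m * p j} := by
    intro k hk hmem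
    exact hmem.2 k hk le_rfl ⟨0, by simp⟩
  have hlt : ∀ k : ℕ, 1 ≤ k → b k < b (k + 1) := by
    intro k hk
    have hmem := (hbrec k hk).1
    have hne : b k ≠ b (k + 1) := fun h => hnotmem k hk (h ▸ hmem)
    rcases Nat.lt_or_ge k 2 with h2 | h2
    · -- k = 1
      interval_cases k
      have h1 : 1 ≤ b (1+1) := hmem.1
      omega
    · -- k ≥ 2 : b k is least of S_{k-1}, and b (k+1) ∈ S_k ⊆ S_{k-1}
      obtain ⟨j, rfl⟩ : ∃ j, k = j + 1 := ⟨k - 1, by omega⟩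
      have hj : 1 ≤ j := by omega
      have hsub : b (j + 1 + 1) ∈
          {n : ℕ | 1 ≤ n ∧ ∀ i : ℕ, 1 ≤ i → i ≤ j → ¬∃ m : ℕ, n = b i + m * p i} := by
        refine ⟨hmem.1, fun i hi hij => hmem.2 i hi (by omega)⟩
      have := (hbrec j hj).2 hsub
      omega
  have hbk : ∀ k : ℕ, 1 ≤ k → k ≤ b k := by
    intro k
    induction k with
    | zero => omega
    | succ n ih =>
      intro _
      rcases Nat.eq_zero_or_pos n with rfl | hn
      · simp [hb1]
      · have := hlt n hn
        have := ih hn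
        omega
  refine ⟨hbk, fun n hn => ?_⟩
  have hnb : n < b (n + 1) := lt_of_lt_of_le (by omega) (hbk (n+1) (by omega))
  by_cases hmem : n ∈ {m : ℕ | 1 ≤ m ∧ ∀ j : ℕ, 1 ≤ j → j ≤ n → ¬∃ m' : ℕ, m = b j + m' * p j}
  · exact absurd ((hbrec n hn).2 hmem) (by omega)
  · simp only [Set.mem_setOf_eq, not_and, not_forall] at hmem
    obtain ⟨j, hj1, hjn, hex⟩ := hmem hn
    rw [not_not] at hex
    exact ⟨j, hj1, hjn, hex⟩

end Aux

lemma aux_geo (p : ℕ → ℕ) (hp1 : 3 ≤ p 1)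
    (hpmono : ∀ k : ℕ, 1 ≤ k → p k < p (k + 1))
    (hpdvd : ∀ k : ℕ, 1 ≤ k → p k ∣ p (k + 1)) :
    ∀ k : ℕ, 3 * 2^k ≤ p (k+1) := by
  intro k
  induction k with
  | zero => simpa using hp1
  | succ n ih =>
    obtain ⟨c, hc⟩ := hpdvd (n+1) (by omega)
    have hlt := hpmono (n+1) (by omega)
    have hc2 : 2 ≤ c := by
      rcases Nat.lt_or_ge c 2 with h | h
      · interval_cases c <;> omega
      · exact h
    calc 3 * 2^(n+1) = 3 * 2^n * 2 := by ring
      _ ≤ p (n+1) * c := Nat.mul_le_mul ih hc2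
      _ = p (n+1+1) := hc.symm

lemma aux_psummable (p : ℕ → ℕ) (hgeo : ∀ k : ℕ, 3 * 2^k ≤ p (k+1)) :
    Summable (fun k : ℕ => (1:ℝ)/p (k+1)) := by
  refine Summable.of_nonneg_of_le (fun k => by positivity) (fun k => ?_)
    ((summable_geometric_of_lt_one (r := (1/2:ℝ)) (by norm_num) (by norm_num)).mul_left (1/3 : ℝ))
  have h1 : (3 * 2^k : ℝ) ≤ (p (k+1) : ℝ) := by exact_mod_cast hgeo k
  have h2 : (0:ℝ) < 3 * 2^k := by positivity
  calc (1:ℝ)/(p (k+1)) ≤ 1/(3 * 2^k) := by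
        apply one_div_le_one_div_of_le h2 h1
    _ = (1/3) * (1/2)^k := by
        rw [div_pow, one_pow]
        ring

/-- For the Toeplitz sequence obtained by placing the value `μ(b_k)` along the
arithmetic progression `{b_k + m p_k : m ≥ 0}` (the scheme of Lemańczyk et al.), where
`ρ = ∑_k 1/p_k < 3/π²`, the resulting sequence `x` is regularly recurrent and strongly
correlated with the Möbius function: `liminf (1/N) ∑_{n≤N} x(n) μ(n) ≥ 6/π² − 2ρ > 0`. -/
theorem toeplitz_strongly_correlated_with_moebius
    (p : ℕ → ℕ)
    (hp1 : 3 ≤ p 1)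
    (hpmono : ∀ k : ℕ, 1 ≤ k → p k < p (k + 1))
    (hpdvd : ∀ k : ℕ, 1 ≤ k → p k ∣ p (k + 1))
    -- ρ = ∑_{k ≥ 1} 1/p_k < 3/π²
    (hρ : (∑' k : ℕ, (1 : ℝ) / p (k + 1)) < 3 / Real.pi ^ 2)
    -- b_1 = 1 and b_{k+1} is the least positive integer not in the first k progressions
    (b : ℕ → ℕ) (hb1 : b 1 = 1)
    (hbrec : ∀ k : ℕ, 1 ≤ k → IsLeast
      {n : ℕ | 1 ≤ n ∧ ∀ j : ℕ, 1 ≤ j → j ≤ k → ¬∃ m : ℕ, n = b j + m * p j} (b (k + 1)))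
    -- x(n) = μ(b_k) for n in the k-th progression
    (x : ℕ → ℤ)
    (hx : ∀ k : ℕ, 1 ≤ k → ∀ m : ℕ, x (b k + m * p k) = ArithmeticFunction.moebius (b k)) :
    -- x is regularly recurrent
    (∀ n : ℕ, 1 ≤ n → ∃ q : ℕ, 1 ≤ q ∧ ∀ m : ℕ, x (n + m * q) = x n) ∧
    -- and strongly correlated with the Möbius function
    6 / Real.pi ^ 2 - 2 * (∑' k : ℕ, (1 : ℝ) / p (k + 1)) ≤
      Filter.liminf (fun N : ℕ =>
        (N : ℝ)⁻¹ * ∑ n ∈ Finset.Icc 1 N,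
          (x n : ℝ) * (ArithmeticFunction.moebius n : ℝ)) atTop ∧
    0 < Filter.liminf (fun N : ℕ =>
        (N : ℝ)⁻¹ * ∑ n ∈ Finset.Icc 1 N,
          (x n : ℝ) * (ArithmeticFunction.moebius n : ℝ)) atTop := by
  classical
  obtain ⟨hbk, hcover⟩ := aux_cover p b hb1 hbrec
  have hgeo := aux_geo p hp1 hpmono hpdvd
  have hp3 : ∀ k : ℕ, 1 ≤ k → 3 ≤ p k := by
    intro k hk
    obtain ⟨j, rfl⟩ : ∃ j, k = j + 1 := ⟨k - 1, by omega⟩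
    have := hgeo j
    have h2 : 1 ≤ 2^j := Nat.one_le_two_pow
    omega
  have hsumm := aux_psummable p hgeo
  set ρ : ℝ := ∑' k : ℕ, (1 : ℝ) / p (k + 1) with hρdef
  -- Part A : regular recurrence
  have partA : ∀ n : ℕ, 1 ≤ n → ∃ q : ℕ, 1 ≤ q ∧ ∀ m : ℕ, x (n + m * q) = x n := by
    intro n hn
    obtain ⟨k, hk, -, m, rfl⟩ := hcover n hn
    refine ⟨p k, by have := hp3 k hk; omega, fun m' => ?_⟩
    rw [show b k + m * p k + m' * p k = b k + (m + m') * p k from by ring,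
      hx k hk (m + m'), hx k hk m]
  -- bound |x n| ≤ 1
  have hxb : ∀ n : ℕ, 1 ≤ n → |x n| ≤ 1 := by
    intro n hn
    obtain ⟨k, hk, -, m, rfl⟩ := hcover n hn
    rw [hx k hk m]
    exact ArithmeticFunction.abs_moebius_le_one
  -- the comparison function G
  set G : ℕ → ℝ := fun N =>
    (∑ d ∈ Finset.Icc 1 (Nat.sqrt N), (μ d : ℝ) / (d:ℝ)^2) - (Nat.sqrt N : ℝ)/N - 2*ρ
    with hGdef
  have hg : Tendsto G atTop (𝓝 (6 / Real.pi ^ 2 - 2 * ρ)) := by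
    have h1 : Tendsto (fun N : ℕ => ∑ d ∈ Finset.Icc 1 (Nat.sqrt N), (μ d : ℝ) / (d:ℝ)^2)
        atTop (𝓝 (6 / Real.pi ^ 2)) := aux_tendsto_partial.comp aux_sqrt_tendsto
    have h2 := (h1.sub aux_sqrt_div_tendsto).sub (tendsto_const_nhds (x := 2*ρ))
    simpa using h2
  -- main eventual inequality
  have hev : ∀ᶠ N in atTop, G N ≤
      (N : ℝ)⁻¹ * ∑ n ∈ Finset.Icc 1 N, (x n : ℝ) * ((μ n : ℤ) : ℝ) := by
    filter_upwards [eventually_ge_atTop 1] with N hN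
    have hNpos : (0:ℝ) < N := by exact_mod_cast hN
    set P : ℕ → Prop := fun n => ∃ k, 1 ≤ k ∧ k ≤ N ∧ ∃ m, 1 ≤ m ∧ n = b k + m * p k
      with hPdef
    have hpoint : ∀ n ∈ Finset.Icc 1 N,
        ((μ n : ℤ) : ℝ)^2 - 2 * (if P n then (1:ℝ) else 0)
          ≤ (x n : ℝ) * ((μ n : ℤ) : ℝ) := by
      intro n hn
      rw [Finset.mem_Icc] at hn
      obtain ⟨k, hk, -, m, rep⟩ := hcover n hn.1
      rcases Nat.eq_zero_or_pos m with rfl | hm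
      · have hbkn : n = b k := by simpa using rep
        have hxn : (x n : ℝ) = ((μ n : ℤ) : ℝ) := by
          rw [hbkn]
          exact_mod_cast congrArg (fun z : ℤ => (z : ℝ)) (by simpa using hx k hk 0)
        rw [hxn, ← sq]
        have : (0:ℝ) ≤ (if P n then (1:ℝ) else 0) := by positivity
        linarith
      · have hble : b k ≤ n := by rw [rep]; exact Nat.le_add_right _ _
        have hPn : P n := ⟨k, hk, by have := hbk k hk; omega, m, hm, rep⟩
        rw [if_pos hPn]
        have h1 : |(x n : ℝ)| ≤ 1 := by exact_mod_cast hxb n hn.1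
        have h2 : |((μ n : ℤ) : ℝ)| ≤ 1 := by
          exact_mod_cast (ArithmeticFunction.abs_moebius_le_one (n := n))
        obtain ⟨h1a, h1b⟩ := abs_le.mp h1
        obtain ⟨h2a, h2b⟩ := abs_le.mp h2
        nlinarith [mul_nonneg (by linarith : (0:ℝ) ≤ 1 + (x n : ℝ))
            (by linarith : (0:ℝ) ≤ 1 + ((μ n : ℤ) : ℝ)),
          mul_nonneg (by linarith : (0:ℝ) ≤ 1 - (x n : ℝ))
            (by linarith : (0:ℝ) ≤ 1 - ((μ n : ℤ) : ℝ))]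
    have hsum1 : (∑ n ∈ Finset.Icc 1 N, ((μ n : ℤ) : ℝ)^2)
        - 2 * (((Finset.Icc 1 N).filter P).card : ℝ)
        ≤ ∑ n ∈ Finset.Icc 1 N, (x n : ℝ) * ((μ n : ℤ) : ℝ) := by
      have h := Finset.sum_le_sum hpoint
      rw [Finset.sum_sub_distrib, ← Finset.mul_sum, Finset.sum_boole] at h
      exact h
    -- counting the bad set
    have hnat : ((Finset.Icc 1 N).filter P).card ≤ ∑ k ∈ Finset.Icc 1 N, N / p k := by
      have hsub : (Finset.Icc 1 N).filter P ⊆ (Finset.Icc 1 N).biUnion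
          (fun k => (Finset.Icc 1 N).filter (fun n => ∃ m, 1 ≤ m ∧ n = b k + m * p k)) := by
        intro n hn
        rw [Finset.mem_filter] at hn
        obtain ⟨hn1, k, hk1, hk2, m, hm, rep⟩ := hn
        rw [Finset.mem_biUnion]
        exact ⟨k, Finset.mem_Icc.mpr ⟨hk1, hk2⟩, Finset.mem_filter.mpr ⟨hn1, m, hm, rep⟩⟩
      calc ((Finset.Icc 1 N).filter P).card ≤ _ := Finset.card_le_card hsub
        _ ≤ ∑ k ∈ Finset.Icc 1 N,
            ((Finset.Icc 1 N).filter (fun n => ∃ m, 1 ≤ m ∧ n = b k + m * p k)).card :=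
          Finset.card_biUnion_le
        _ ≤ ∑ k ∈ Finset.Icc 1 N, N / p k := by
          apply Finset.sum_le_sum
          intro k hk
          rw [Finset.mem_Icc] at hk
          have hpk : 0 < p k := by have := hp3 k hk.1; omega
          have hsub2 : (Finset.Icc 1 N).filter (fun n => ∃ m, 1 ≤ m ∧ n = b k + m * p k)
              ⊆ (Finset.Icc 1 (N / p k)).image (fun m => b k + m * p k) := by
            intro n hn
            rw [Finset.mem_filter, Finset.mem_Icc] at hn
            obtain ⟨⟨-, hn2⟩, m, hm, rep⟩ := hn
            rw [Finset.mem_image]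
            refine ⟨m, Finset.mem_Icc.mpr ⟨hm, ?_⟩, rep.symm⟩
            rw [Nat.le_div_iff_mul_le hpk]
            calc m * p k ≤ b k + m * p k := Nat.le_add_left _ _
              _ = n := rep.symm
              _ ≤ N := hn2
          calc _ ≤ ((Finset.Icc 1 (N / p k)).image (fun m => b k + m * p k)).card :=
                Finset.card_le_card hsub2
            _ ≤ (Finset.Icc 1 (N / p k)).card := Finset.card_image_le
            _ = N / p k := by rw [Nat.card_Icc]; simp
    have hcard : (((Finset.Icc 1 N).filter P).card : ℝ) ≤ N * ρ := by
      calc (((Finset.Icc 1 N).filter P).card : ℝ)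
          ≤ ((∑ k ∈ Finset.Icc 1 N, N / p k : ℕ) : ℝ) := by exact_mod_cast hnat
        _ = ∑ k ∈ Finset.Icc 1 N, ((N / p k : ℕ) : ℝ) := by push_cast; ring
        _ ≤ ∑ k ∈ Finset.Icc 1 N, (N:ℝ) * (1/(p k : ℝ)) := by
            apply Finset.sum_le_sum
            intro k hk
            calc ((N / p k : ℕ) : ℝ) ≤ (N:ℝ) / (p k : ℝ) := Nat.cast_div_le
              _ = (N:ℝ) * (1/(p k : ℝ)) := by ring
        _ = (N:ℝ) * ∑ k ∈ Finset.Icc 1 N, (1/(p k : ℝ)) := by rw [Finset.mul_sum]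
        _ ≤ (N:ℝ) * ρ := by
            apply mul_le_mul_of_nonneg_left _ (le_of_lt hNpos)
            have hre : ∑ k ∈ Finset.Icc 1 N, (1/(p k : ℝ))
                = ∑ i ∈ Finset.range N, (1/(p (i+1) : ℝ)) := by
              rw [← Finset.Ico_add_one_right_eq_Icc, Finset.sum_Ico_eq_sum_range]
              simp [add_comm]
            rw [hre, hρdef]
            exact Summable.sum_le_tsum (Finset.range N) (fun i _ => by positivity) hsumm
    have hSQ := aux_SQ_lower N hN
    have h7 : (N:ℝ)⁻¹ * (((Finset.Icc 1 N).filter P).card : ℝ) ≤ ρ := by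
      calc (N:ℝ)⁻¹ * (((Finset.Icc 1 N).filter P).card : ℝ)
          ≤ (N:ℝ)⁻¹ * ((N:ℝ) * ρ) := by
            apply mul_le_mul_of_nonneg_left hcard (by positivity)
        _ = ρ := by field_simp
    have h5 : (N:ℝ)⁻¹ * ((∑ n ∈ Finset.Icc 1 N, ((μ n : ℤ) : ℝ)^2)
          - 2 * (((Finset.Icc 1 N).filter P).card : ℝ))
        ≤ (N:ℝ)⁻¹ * ∑ n ∈ Finset.Icc 1 N, (x n : ℝ) * ((μ n : ℤ) : ℝ) :=
      mul_le_mul_of_nonneg_left hsum1 (by positivity)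
    have hexp : (N:ℝ)⁻¹ * ((∑ n ∈ Finset.Icc 1 N, ((μ n : ℤ) : ℝ)^2)
          - 2 * (((Finset.Icc 1 N).filter P).card : ℝ))
        = (N:ℝ)⁻¹ * (∑ n ∈ Finset.Icc 1 N, ((μ n : ℤ) : ℝ)^2)
          - 2 * ((N:ℝ)⁻¹ * (((Finset.Icc 1 N).filter P).card : ℝ)) := by ring
    rw [hGdef]
    simp only []
    linarith [hSQ, h5, h7, hexp]
  -- liminf comparison
  have hbddF : Filter.IsBoundedUnder (· ≤ ·) atTop
      (fun N : ℕ => (N : ℝ)⁻¹ * ∑ n ∈ Finset.Icc 1 N, (x n : ℝ) * ((μ n : ℤ) : ℝ)) := by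
    apply Filter.isBoundedUnder_of
    refine ⟨1, fun N => ?_⟩
    rcases Nat.eq_zero_or_pos N with rfl | hN
    · simp
    have hNpos : (0:ℝ) < N := by exact_mod_cast hN
    have hsum : ∑ n ∈ Finset.Icc 1 N, (x n : ℝ) * ((μ n : ℤ) : ℝ) ≤ N := by
      calc ∑ n ∈ Finset.Icc 1 N, (x n : ℝ) * ((μ n : ℤ) : ℝ)
          ≤ ∑ _n ∈ Finset.Icc 1 N, (1:ℝ) := by
            apply Finset.sum_le_sum
            intro n hn
            rw [Finset.mem_Icc] at hn
            have h1 : |(x n : ℝ)| ≤ 1 := by exact_mod_cast hxb n hn.1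
            have h2 : |((μ n : ℤ) : ℝ)| ≤ 1 := by
              exact_mod_cast (ArithmeticFunction.abs_moebius_le_one (n := n))
            calc (x n : ℝ) * ((μ n : ℤ) : ℝ) ≤ |(x n : ℝ) * ((μ n : ℤ) : ℝ)| := le_abs_self _
              _ = |(x n : ℝ)| * |((μ n : ℤ) : ℝ)| := abs_mul _ _
              _ ≤ 1 := by nlinarith [abs_nonneg ((x n : ℝ)), abs_nonneg (((μ n : ℤ) : ℝ))]
        _ = N := by rw [Finset.sum_const, Nat.card_Icc]; simp
    calc (N : ℝ)⁻¹ * ∑ n ∈ Finset.Icc 1 N, (x n : ℝ) * ((μ n : ℤ) : ℝ)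
        ≤ (N : ℝ)⁻¹ * N := mul_le_mul_of_nonneg_left hsum (by positivity)
      _ = 1 := by field_simp
  have hB : 6 / Real.pi ^ 2 - 2 * ρ ≤
      Filter.liminf (fun N : ℕ =>
        (N : ℝ)⁻¹ * ∑ n ∈ Finset.Icc 1 N,
          (x n : ℝ) * ((μ n : ℤ) : ℝ)) atTop := by
    rw [← hg.liminf_eq]
    exact Filter.liminf_le_liminf hev hg.isBoundedUnder_ge hbddF.isCoboundedUnder_ge
  have hpos : 0 < 6 / Real.pi ^ 2 - 2 * ρ := by
    have hπ : (0:ℝ) < Real.pi ^ 2 := by positivity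
    have h6 : (6:ℝ) / Real.pi ^ 2 = 2 * (3 / Real.pi ^ 2) := by ring
    rw [hρdef] at *
    linarith [hρ]
  exact ⟨partA, hB, lt_of_lt_of_le hpos hB⟩
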